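/- Let q : (V^n, Σ) → (M^n, {p}) be a topological blowup of an n-manifold M at a point p (V an n-manifold, Σ = q⁻¹({p}) compact connected nonempty, q a homeomorphism from V \ Σ to M \ {p}) with n ≥ 2, and suppose at least two distinct points lie on the frontier of Σ in V. Then there exists a homeomorphism h of (M, {p}) that admits no continuous lift through q, i.e. no continuous h̃ : V → V with q ∘ h̃ = h ∘ q. -/

import Mathlib

set_option linter.unusedSectionVars false
set_option linter.unusedTactic false
set_option linter.unreachableTactic false

open Set Metric Topology Filter
open scoped NNReal



section Annulus

variable {E : Type*} [NormedAddCommGroup E]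

/-- The open annulus centered at `c` with radii `s < S`. -/
def openAnn (c : E) (s S : ℝ) : Set E := {x | s < dist x c ∧ dist x c < S}

theorem isOpen_openAnn (c : E) (s S : ℝ) : IsOpen (openAnn c s S) := by
  have h1 : IsOpen {x : E | s < dist x c} :=
    isOpen_lt continuous_const (continuous_id.dist continuous_const)
  have h2 : IsOpen {x : E | dist x c < S} :=
    isOpen_lt (continuous_id.dist continuous_const) continuous_const
  exact h1.inter h2

/-- A homeomorphism that is the identity outside `S` preserves membership in `S`. -/
theorem Homeomorph.mem_iff_of_fixed_compl {X : Type*} [TopologicalSpace X] {T : X ≃ₜ X}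
    {S : Set X} (h : ∀ x ∉ S, T x = x) : ∀ x, (x ∈ S ↔ T x ∈ S) := by
  intro x
  constructor
  · intro hx
    by_contra hTx
    have h2 : T x = x := T.injective (h (T x) hTx)
    rw [h2] at hTx
    exact hTx hx
  · intro hTx
    by_contra hx
    rw [h x hx] at hTx
    exact hx hTx

theorem Homeomorph.symm_fixed_compl {X : Type*} [TopologicalSpace X] {T : X ≃ₜ X}
    {S : Set X} (h : ∀ x ∉ S, T x = x) : ∀ x ∉ S, T.symm x = x := by
  intro x hx
  have h1 : T.symm x ∉ S := by
    intro hmem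
    have := (Homeomorph.mem_iff_of_fixed_compl h (T.symm x)).1 hmem
    rw [T.apply_symm_apply] at this
    exact hx this
  apply T.injective
  rw [T.apply_symm_apply, h x hx]

/-- Gluing countably many homeomorphisms supported on disjoint annuli shrinking to `c`. -/
theorem exists_glued_homeo (c : E) (s : ℕ → ℝ) (hpos : ∀ j, 0 < s j)
    (hdec : StrictAnti s) (hlim : Tendsto s atTop (𝓝 0))
    (H : ℕ → E ≃ₜ E) (hsupp : ∀ j, ∀ x ∉ openAnn c (s (j + 1)) (s j), H j x = x) :
    ∃ G : E ≃ₜ E, (∀ j, ∀ x ∈ openAnn c (s (j + 1)) (s j), G x = H j x) ∧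
      (∀ x, (∀ j, x ∉ openAnn c (s (j + 1)) (s j)) → G x = x) := by
  classical
  set O : ℕ → Set E := fun j => openAnn c (s (j + 1)) (s j) with hO
  have hOopen : ∀ j, IsOpen (O j) := fun j => isOpen_openAnn c _ _
  have huniq : ∀ i j : ℕ, ∀ x, x ∈ O i → x ∈ O j → i = j := by
    have key : ∀ i j : ℕ, i < j → ∀ x, x ∈ O i → x ∈ O j → False := by
      intro i j hij x hxi hxj
      have h1 : s j ≤ s (i + 1) := hdec.antitone hij
      exact absurd (hxj.2.trans_le h1) (not_lt.2 (le_of_lt hxi.1))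
    intro i j x hxi hxj
    rcases lt_trichotomy i j with h | h | h
    · exact absurd (key i j h x hxi hxj) (not_false)
    · exact h
    · exact absurd (key j i h x hxj hxi) (not_false)
  -- the glued map associated to a family
  set F : (ℕ → E ≃ₜ E) → E → E :=
    fun K x => if h : ∃ j, x ∈ O j then K h.choose x else x with hF
  have hFmem : ∀ (K : ℕ → E ≃ₜ E) (j : ℕ) (x : E), x ∈ O j → F K x = K j x := by
    intro K j x hx
    have hex : ∃ i, x ∈ O i := ⟨j, hx⟩
    have := huniq hex.choose j x hex.choose_spec hx
    simp only [hF, dif_pos hex, this]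
  have hFnone : ∀ (K : ℕ → E ≃ₜ E) (x : E), (∀ j, x ∉ O j) → F K x = x := by
    intro K x hx
    have : ¬∃ j, x ∈ O j := by push_neg; exact hx
    simp only [hF, dif_neg this]
  -- continuity of the glued map
  have hcont : ∀ (K : ℕ → E ≃ₜ E), (∀ j, ∀ x ∉ O j, K j x = x) → Continuous (F K) := by
    intro K hKsupp
    rw [continuous_iff_continuousAt]
    intro x
    by_cases hx : ∃ j, x ∈ O j
    · obtain ⟨j, hj⟩ := hx
      have hev : F K =ᶠ[𝓝 x] K j :=
        Filter.eventuallyEq_of_mem ((hOopen j).mem_nhds hj) (fun y hy => hFmem K j y hy)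
      exact ((K j).continuous.continuousAt).congr hev.symm
    · push_neg at hx
      have hKmem : ∀ (j : ℕ) (y : E), y ∈ O j → K j y ∈ O j :=
        fun j y hy => (Homeomorph.mem_iff_of_fixed_compl (hKsupp j) y).1 hy
      have hFx : F K x = x := hFnone K x hx
      by_cases hxc : x = c
      · rw [ContinuousAt, hFx, hxc]
        rw [Metric.tendsto_nhds_nhds]
        intro ε hε
        obtain ⟨J, hJ⟩ : ∃ J, s J < ε := (hlim.eventually_lt_const hε).exists
        refine ⟨s J, hpos J, fun {y} hy => ?_⟩
        have hy' : dist y c < s J := by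
          first
          | exact hy
          | rwa [dist_comm] at hy
        have hFc : F K c = c := by
          refine hFnone K c (fun j hc => ?_)
          simp only [hO, openAnn, dist_self, mem_setOf_eq] at hc
          exact absurd hc.1 (not_lt.2 (le_of_lt (hpos (j + 1))))
        have goal' : dist (F K y) c < ε := by
          by_cases hy2 : ∃ j, y ∈ O j
          · obtain ⟨j, hj⟩ := hy2
            rw [hFmem K j y hj]
            have h1 : s (j + 1) < s J := lt_trans hj.1 hy'
            have h2 : J ≤ j := by
              have := hdec.lt_iff_gt.1 h1
              omega
            have h3 : dist (K j y) c < s j := (hKmem j y hj).2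
            calc dist (K j y) c < s j := h3
              _ ≤ s J := hdec.antitone h2
              _ < ε := hJ
          · push_neg at hy2
            rw [hFnone K y hy2]
            exact lt_trans hy' hJ
        exact goal' 
      · have hd : 0 < dist x c := dist_pos.2 hxc
        obtain ⟨J, hJ⟩ : ∃ J, s J < dist x c := (hlim.eventually_lt_const hd).exists
        have hxfix : ∀ j, K j x = x := fun j => hKsupp j x (hx j)
        rw [ContinuousAt, hFx]
        intro A hA
        rw [Filter.mem_map]
        have h1 : ∀ᶠ y in 𝓝 x, y ∈ A := hA
        have h2 : ∀ᶠ y in 𝓝 x, ∀ j ∈ Finset.range (J + 1), K j y ∈ A := by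
          rw [eventually_all_finset]
          intro j _
          have : Tendsto (K j) (𝓝 x) (𝓝 x) := by
            have := (K j).continuous.continuousAt (x := x)
            rwa [ContinuousAt, hxfix j] at this
          exact this hA
        have h3 : ∀ᶠ y in 𝓝 x, s J < dist y c :=
          (isOpen_lt continuous_const (continuous_id.dist continuous_const)).mem_nhds hJ
        have goal' : ∀ᶠ y in 𝓝 x, F K y ∈ A := by
          filter_upwards [h1, h2, h3] with y hyA hyK hyW
          by_cases hy2 : ∃ j, y ∈ O j
          · obtain ⟨j, hj⟩ := hy2
            rw [hFmem K j y hj]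
            have hjJ : j < J + 1 := by
              have hsJ : s J < s j := lt_trans hyW hj.2
              have := hdec.lt_iff_gt.1 hsJ
              omega
            exact hyK j (Finset.mem_range.2 hjJ)
          · push_neg at hy2
            rwa [hFnone K y hy2]
        exact goal' 
  -- the inverse family
  set K' : ℕ → E ≃ₜ E := fun j => (H j).symm with hK'
  have hK'supp : ∀ j, ∀ x ∉ O j, K' j x = x :=
    fun j => Homeomorph.symm_fixed_compl (hsupp j)
  have hHmem : ∀ (j : ℕ) (y : E), y ∈ O j → H j y ∈ O j :=
    fun j y hy => (Homeomorph.mem_iff_of_fixed_compl (hsupp j) y).1 hy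
  have hK'mem : ∀ (j : ℕ) (y : E), y ∈ O j → K' j y ∈ O j :=
    fun j y hy => (Homeomorph.mem_iff_of_fixed_compl (hK'supp j) y).1 hy
  have hleft : ∀ x, F K' (F H x) = x := by
    intro x
    by_cases hx : ∃ j, x ∈ O j
    · obtain ⟨j, hj⟩ := hx
      rw [hFmem H j x hj, hFmem K' j _ (hHmem j x hj)]
      exact (H j).symm_apply_apply x
    · push_neg at hx
      rw [hFnone H x hx, hFnone K' x hx]
  have hright : ∀ x, F H (F K' x) = x := by
    intro x
    by_cases hx : ∃ j, x ∈ O j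
    · obtain ⟨j, hj⟩ := hx
      rw [hFmem K' j x hj, hFmem H j _ (hK'mem j x hj)]
      exact (H j).apply_symm_apply x
    · push_neg at hx
      rw [hFnone K' x hx, hFnone H x hx]
  refine ⟨⟨⟨F H, F K', hleft, hright⟩, hcont H hsupp, hcont K' hK'supp⟩, ?_, ?_⟩
  · exact fun j x hx => hFmem H j x hx
  · exact fun x hx => hFnone H x hx

end Annulus


section Move

variable {E : Type*} [NormedAddCommGroup E] [NormedSpace ℝ E] [CompleteSpace E] [Nontrivial E]

/-- Translation supported in a ball: a homeomorphism of `E` moving the center `c` of a ball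
of radius `r` to `c + v` (where `‖v‖ < r`), equal to the identity outside the ball. -/
theorem exists_homeo_move_ball (c v : E) (r : ℝ) (hr : 0 < r) (hv : ‖v‖ < r) :
    ∃ T : E ≃ₜ E, T c = c + v ∧ ∀ x, x ∉ ball c r → T x = x := by
  set f : E → E := fun x => x + (max (1 - ‖x - c‖ / r) 0) • v with hf
  have hm : ∀ x y : E, |max (1 - ‖x - c‖ / r) 0 - max (1 - ‖y - c‖ / r) 0| ≤ ‖x - y‖ / r := by
    intro x y
    have h1 : (1 - ‖x - c‖ / r) - (1 - ‖y - c‖ / r) = (‖y - c‖ - ‖x - c‖) / r := by ring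
    calc |max (1 - ‖x - c‖ / r) 0 - max (1 - ‖y - c‖ / r) 0|
        ≤ |(1 - ‖x - c‖ / r) - (1 - ‖y - c‖ / r)| := abs_max_sub_max_le_abs _ _ _
      _ = |‖y - c‖ - ‖x - c‖| / r := by rw [h1, abs_div, abs_of_pos hr]
      _ ≤ ‖y - x‖ / r := by
          gcongr
          exact (abs_norm_sub_norm_le _ _).trans_eq
            (by rw [show y - c - (x - c) = y - x from by abel])
      _ = ‖x - y‖ / r := by rw [norm_sub_rev]
  set C : ℝ≥0 := Real.toNNReal (‖v‖ / r) with hC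
  have hCcoe : (C : ℝ) = ‖v‖ / r := Real.coe_toNNReal _ (by positivity)
  have happrox : ApproximatesLinearOn f
      ((ContinuousLinearEquiv.refl ℝ E : E ≃L[ℝ] E) : E →L[ℝ] E) univ C := by
    intro x _ y _
    have : f x - f y - (x - y) = (max (1 - ‖x - c‖ / r) 0 - max (1 - ‖y - c‖ / r) 0) • v := by
      simp only [hf]
      rw [sub_smul]; abel
    have hid : (((ContinuousLinearEquiv.refl ℝ E : E ≃L[ℝ] E) : E →L[ℝ] E)) (x - y) = x - y := by
      simp
    rw [hid, this, norm_smul, hCcoe]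
    calc |max (1 - ‖x - c‖ / r) 0 - max (1 - ‖y - c‖ / r) 0| * ‖v‖
        ≤ (‖x - y‖ / r) * ‖v‖ := by
          exact mul_le_mul_of_nonneg_right (hm x y) (norm_nonneg v)
      _ = ‖v‖ / r * ‖x - y‖ := by ring
  have hNone : ‖(((ContinuousLinearEquiv.refl ℝ E).symm :
      E ≃L[ℝ] E) : E →L[ℝ] E)‖₊ = 1 := by
    simp
  have hc : Subsingleton E ∨ C < ‖(((ContinuousLinearEquiv.refl ℝ E).symm :
      E ≃L[ℝ] E) : E →L[ℝ] E)‖₊⁻¹ := by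
    right
    rw [hNone, inv_one]
    rw [← NNReal.coe_lt_coe, hCcoe, NNReal.coe_one]
    exact (div_lt_one hr).2 hv
  refine ⟨happrox.toHomeomorph f hc, ?_, ?_⟩
  · show f c = c + v
    simp [hf]
  · intro x hx
    show f x = x
    have : 1 - ‖x - c‖ / r ≤ 0 := by
      have : r ≤ ‖x - c‖ := by
        simpa [dist_eq_norm] using hx
      have := (div_le_div_iff_of_pos_right hr).2 this
      simp only [div_self (ne_of_gt hr)] at this
      linarith
    simp [hf, max_eq_right this]

/-- A homeomorphism that is the identity outside `S` maps `S` onto `S`. -/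
theorem Homeomorph.image_eq_of_fixed_compl {X : Type*} [TopologicalSpace X] {T : X ≃ₜ X}
    {S : Set X} (h : ∀ x ∉ S, T x = x) : ∀ x, (x ∈ S ↔ T x ∈ S) := by
  intro x
  constructor
  · intro hx
    by_contra hTx
    have h2 : T x = x := T.injective (h (T x) hTx)
    rw [h2] at hTx
    exact hTx hx
  · intro hTx
    by_contra hx
    rw [h x hx] at hTx
    exact hx hTx

/-- In an open preconnected subset `U` of a real Banach space, any point can be moved to
any other point by a homeomorphism of the whole space that is the identity outside `U`. -/
theorem exists_homeo_move_of_isOpen_isPreconnected {U : Set E} (hU : IsOpen U)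
    (hconn : IsPreconnected U) {x y : E} (hx : x ∈ U) (hy : y ∈ U) :
    ∃ T : E ≃ₜ E, T x = y ∧ ∀ z ∉ U, T z = z := by
  set S : Set E := {w | w ∈ U ∧ ∃ T : E ≃ₜ E, T x = w ∧ ∀ z ∉ U, T z = z} with hS
  have hSU : S ⊆ U := fun w hw => hw.1
  have hxS : x ∈ S := ⟨hx, Homeomorph.refl E, rfl, fun _ _ => rfl⟩
  have hSopen : IsOpen S := by
    rw [Metric.isOpen_iff]
    rintro w ⟨hwU, T, hT1, hT2⟩
    obtain ⟨r, hr, hball⟩ := Metric.isOpen_iff.1 hU w hwU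
    refine ⟨r, hr, fun z hz => ?_⟩
    obtain ⟨T', hT'1, hT'2⟩ := exists_homeo_move_ball w (z - w) r hr (by
      simpa [Metric.mem_ball, dist_eq_norm] using hz)
    refine ⟨hball hz, T.trans T', ?_, ?_⟩
    · simp [hT1, hT'1]
    · intro u hu
      simp [hT2 u hu, hT'2 u (fun h => hu (hball h))]
  have hclosure : U ∩ closure S ⊆ S := by
    rintro w ⟨hwU, hwcl⟩
    obtain ⟨r, hr, hball⟩ := Metric.isOpen_iff.1 hU w hwU
    obtain ⟨z, hzS, hzw⟩ : (S ∩ ball w (r / 2)).Nonempty := by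
      have := mem_closure_iff.1 hwcl (ball w (r / 2)) isOpen_ball
        (mem_ball_self (by linarith))
      obtain ⟨z, hz1, hz2⟩ := this
      exact ⟨z, hz2, hz1⟩
    obtain ⟨hzU, T, hT1, hT2⟩ := hzS
    have hsub : ball z (r / 2) ⊆ U := fun u hu => hball (by
      have : dist u w ≤ dist u z + dist z w := dist_triangle u z w
      have h1 : dist u z < r / 2 := hu
      have h2 : dist z w < r / 2 := hzw
      exact mem_ball.2 (by rw [mem_ball] at *; linarith))
    obtain ⟨T', hT'1, hT'2⟩ := exists_homeo_move_ball z (w - z) (r / 2) (by linarith) (by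
      have h3 : dist w z < r / 2 := by rw [dist_comm]; exact mem_ball.1 hzw
      simpa [dist_eq_norm] using h3)
    refine ⟨hwU, T.trans T', ?_, ?_⟩
    · simp [hT1, hT'1]
    · intro u hu
      simp [hT2 u hu, hT'2 u (fun h => hu (hsub h))]
  have hUsub : U ⊆ S ∪ (closure S)ᶜ := by
    intro w hw
    by_cases h : w ∈ closure S
    · exact Or.inl (hclosure ⟨hw, h⟩)
    · exact Or.inr h
  have : U ⊆ S :=
    hconn.subset_left_of_subset_union hSopen isClosed_closure.isOpen_compl
      (disjoint_compl_right.mono_left subset_closure) hUsub ⟨x, hx, hxS⟩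
  exact (this hy).2

end Move


section Annulus

variable {E : Type*} [NormedAddCommGroup E] [NormedSpace ℝ E]


theorem isPreconnected_openAnn (h : 1 < Module.rank ℝ E) (c : E) {s S : ℝ}
    (hs : 0 ≤ s) (hsS : s < S) : IsPreconnected (openAnn c s S) := by
  have hkey : ∀ α β d1 d2 : ℝ, 0 ≤ α → 0 ≤ β → α + β = 1 →
      s < d1 → d1 < S → s < d2 → d2 < S → s < α * d1 + β * d2 ∧ α * d1 + β * d2 < S := by
    intro α β d1 d2 hα hβ hαβ h1 h2 h3 h4
    rcases eq_or_lt_of_le hα with hα0 | hα0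
    · have hβ1 : β = 1 := by linarith
      rw [← hα0, hβ1]; constructor <;> linarith
    · have e1 : α * s < α * d1 := by exact mul_lt_mul_of_pos_left h1 hα0
      have e2 : β * s ≤ β * d2 := mul_le_mul_of_nonneg_left (le_of_lt h3) hβ
      have e3 : α * d1 < α * S := mul_lt_mul_of_pos_left h2 hα0
      have e4 : β * d2 ≤ β * S := mul_le_mul_of_nonneg_left (le_of_lt h4) hβ
      constructor <;> nlinarith
  have hjoined : ∀ x ∈ openAnn c s S, ∀ y ∈ openAnn c s S, JoinedIn (openAnn c s S) x y := by
    intro x hx y hy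
    obtain ⟨hx1, hx2⟩ := hx
    obtain ⟨hy1, hy2⟩ := hy
    set dx := dist x c with hdx
    set ρ := dist y c with hρ
    have hdxpos : 0 < dx := lt_of_le_of_lt hs hx1
    have hρpos : 0 < ρ := lt_of_le_of_lt hs hy1
    set x' : E := c + (ρ / dx) • (x - c) with hx'def
    have hx'dist : dist x' c = ρ := by
      rw [dist_eq_norm]
      have : x' - c = (ρ / dx) • (x - c) := by rw [hx'def]; abel
      rw [this, norm_smul, Real.norm_eq_abs, abs_of_pos (by positivity : (0:ℝ) < ρ / dx),
        ← dist_eq_norm, ← hdx, div_mul_cancel₀]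
      exact ne_of_gt hdxpos
    have hx'mem : x' ∈ openAnn c s S := by
      constructor <;> rw [hx'dist] <;> [exact hy1; exact hy2]
    have hseg : segment ℝ x x' ⊆ openAnn c s S := by
      rintro z ⟨α, β, hα, hβ, hαβ, rfl⟩
      have hβ' : β = 1 - α := by linarith
      subst hβ'
      have hz : α • x + (1 - α) • x' - c = (α + (1 - α) * (ρ / dx)) • (x - c) := by
        rw [hx'def]; module
      have hnorm : dist (α • x + (1 - α) • x') c = α * dx + (1 - α) * ρ := by
        rw [dist_eq_norm, hz, norm_smul, Real.norm_eq_abs,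
          abs_of_nonneg (by positivity : (0:ℝ) ≤ α + (1 - α) * (ρ / dx)), ← dist_eq_norm, ← hdx]
        field_simp
      have := hkey α (1 - α) dx ρ hα (by linarith) (by ring) hx1 hx2 hy1 hy2
      exact ⟨by rw [hnorm]; exact this.1, by rw [hnorm]; exact this.2⟩
    have hjoin1 : JoinedIn (openAnn c s S) x x' := by
      have hconv : IsPathConnected (segment ℝ x x') :=
        (convex_segment x x').isPathConnected ⟨x, left_mem_segment ℝ x x'⟩
      exact (hconv.joinedIn x (left_mem_segment ℝ x x') x' (right_mem_segment ℝ x x')).mono hseg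
    have hsphere : sphere c ρ ⊆ openAnn c s S := by
      intro z hz
      rw [mem_sphere] at hz
      exact ⟨by rw [hz]; exact hy1, by rw [hz]; exact hy2⟩
    have hjoin2 : JoinedIn (openAnn c s S) x' y := by
      have := (isPathConnected_sphere h c (le_of_lt hρpos)).joinedIn x'
        (by rw [mem_sphere]; exact hx'dist) y (by rw [mem_sphere])
      exact this.mono hsphere
    exact hjoin1.trans hjoin2
  rcases eq_empty_or_nonempty (openAnn c s S) with he | ⟨x0, hx0⟩
  · rw [he]; exact isPreconnected_empty
  · exact (IsPathConnected.isConnected ⟨x0, hx0, fun y hy => hjoined x0 hx0 y hy⟩).isPreconnected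

end Annulus


section Transfer

variable {M : Type*} {E : Type*} [TopologicalSpace M] [T2Space M] [TopologicalSpace E]

open scoped Classical in
/-- The underlying function for transporting a supported homeomorphism through a chart. -/
private noncomputable def transferFun (ψ : OpenPartialHomeomorph M E) (G : E → E) : M → M :=
  fun x => if x ∈ ψ.source then ψ.symm (G (ψ x)) else x

theorem transfer_aux (ψ : OpenPartialHomeomorph M E) (G : E ≃ₜ E) (K : Set E)
    (hK : IsCompact K) (hKt : K ⊆ ψ.target) (hGsupp : ∀ z ∉ K, G z = z) :
    ∀ x ∈ ψ.source, transferFun ψ G x = ψ.symm (G (ψ x)) := by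
  intro x hx
  unfold transferFun
  exact if_pos hx

theorem transfer_mem (ψ : OpenPartialHomeomorph M E) (G : E ≃ₜ E) (K : Set E)
    (hKt : K ⊆ ψ.target) (hGsupp : ∀ z ∉ K, G z = z) :
    ∀ x ∈ ψ.source, G (ψ x) ∈ ψ.target := by
  intro x hx
  by_cases h : ψ x ∈ K
  · have : G (ψ x) ∈ K := (Homeomorph.mem_iff_of_fixed_compl hGsupp (ψ x)).1 h
    exact hKt this
  · rw [hGsupp _ h]
    exact ψ.map_source hx

theorem transfer_continuous (ψ : OpenPartialHomeomorph M E) (G : E ≃ₜ E) (K : Set E)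
    (hK : IsCompact K) (hKt : K ⊆ ψ.target) (hGsupp : ∀ z ∉ K, G z = z) :
    Continuous (transferFun ψ G) := by
  have hC : IsCompact (ψ.symm '' K) := hK.image_of_continuousOn (ψ.continuousOn_symm.mono hKt)
  have hCsub : ψ.symm '' K ⊆ ψ.source := by
    rintro _ ⟨z, hz, rfl⟩
    exact ψ.map_target (hKt hz)
  have hCclosed : IsClosed (ψ.symm '' K) := hC.isClosed
  rw [continuous_iff_continuousAt]
  intro x
  by_cases hx : x ∈ ψ.source
  · have h1 : ContinuousAt (fun y => ψ.symm (G (ψ y))) x := by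
      have hψ : ContinuousAt ψ x := ψ.continuousAt hx
      have hG : ContinuousAt G (ψ x) := G.continuous.continuousAt
      have hψs : ContinuousAt ψ.symm (G (ψ x)) :=
        ψ.continuousAt_symm (transfer_mem ψ G K hKt hGsupp x hx)
      have hGψ : ContinuousAt (⇑G ∘ ⇑ψ) x := hG.comp hψ
      have h2 : ContinuousAt (⇑ψ.symm ∘ (⇑G ∘ ⇑ψ)) x :=
        ContinuousAt.comp (f := ⇑G ∘ ⇑ψ) hψs hGψ
      exact h2
    refine h1.congr ?_
    exact Filter.eventuallyEq_of_mem (ψ.open_source.mem_nhds hx)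
      (fun y hy => (transfer_aux ψ G K hK hKt hGsupp y hy).symm)
  · have hxC : x ∉ ψ.symm '' K := fun h => hx (hCsub h)
    have h1 : ContinuousAt (id : M → M) x := continuousAt_id
    refine h1.congr ?_
    refine Filter.eventuallyEq_of_mem (hCclosed.isOpen_compl.mem_nhds hxC) (fun y hy => ?_)
    show id y = transferFun ψ G y
    simp only [id_eq]
    symm
    by_cases hys : y ∈ ψ.source
    · have hyK : ψ y ∉ K := by
        intro hmem
        exact hy ⟨ψ y, hmem, ψ.left_inv hys⟩
      rw [transfer_aux ψ G K hK hKt hGsupp y hys, hGsupp _ hyK, ψ.left_inv hys]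
    · unfold transferFun
      exact if_neg hys

/-- Transport a homeomorphism of the model space, supported in a compact subset of the
target of a chart, to a homeomorphism of the manifold. -/
theorem exists_homeo_of_chart (ψ : OpenPartialHomeomorph M E) (G : E ≃ₜ E) (K : Set E)
    (hK : IsCompact K) (hKt : K ⊆ ψ.target) (hGsupp : ∀ z ∉ K, G z = z) :
    ∃ h : M ≃ₜ M, ∀ x ∈ ψ.source, h x = ψ.symm (G (ψ x)) := by
  have hGsymm : ∀ z ∉ K, G.symm z = z := Homeomorph.symm_fixed_compl hGsupp
  have hinv : ∀ x, transferFun ψ G.symm (transferFun ψ G x) = x := by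
    intro x
    by_cases hx : x ∈ ψ.source
    · rw [transfer_aux ψ G K hK hKt hGsupp x hx]
      have hmem : G (ψ x) ∈ ψ.target := transfer_mem ψ G K hKt hGsupp x hx
      have hmem2 : ψ.symm (G (ψ x)) ∈ ψ.source := ψ.map_target hmem
      rw [transfer_aux ψ G.symm K hK hKt hGsymm _ hmem2, ψ.right_inv hmem,
        G.symm_apply_apply, ψ.left_inv hx]
    · unfold transferFun
      rw [if_neg hx, if_neg hx]
  have hinv' : ∀ x, transferFun ψ G (transferFun ψ G.symm x) = x := by
    intro x
    by_cases hx : x ∈ ψ.source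
    · rw [transfer_aux ψ G.symm K hK hKt hGsymm x hx]
      have hmem : G.symm (ψ x) ∈ ψ.target := transfer_mem ψ G.symm K hKt hGsymm x hx
      have hmem2 : ψ.symm (G.symm (ψ x)) ∈ ψ.source := ψ.map_target hmem
      rw [transfer_aux ψ G K hK hKt hGsupp _ hmem2, ψ.right_inv hmem,
        G.apply_symm_apply, ψ.left_inv hx]
    · unfold transferFun
      rw [if_neg hx, if_neg hx]
  refine ⟨⟨⟨transferFun ψ G, transferFun ψ G.symm, hinv, hinv'⟩,
    transfer_continuous ψ G K hK hKt hGsupp,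
    transfer_continuous ψ G.symm K hK hKt hGsymm⟩,
    fun x hx => transfer_aux ψ G K hK hKt hGsupp x hx⟩

end Transfer

section Main



/-- A topological blowup of an `n`-manifold `M` at a point `p`: a quotient map
`q : V → M` from an `n`-manifold `V` such that `Σ = q⁻¹({p})` is nonempty, compact and
connected, and `q` restricts to a homeomorphism `V \ Σ → M \ {p}`. -/
structure TopBlowup (n : ℕ) (V M : Type*) [TopologicalSpace V] [TopologicalSpace M]
    [T2Space V] [T2Space M]
    [ChartedSpace (EuclideanSpace ℝ (Fin n)) V]
    [ChartedSpace (EuclideanSpace ℝ (Fin n)) M] (p : M) where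
  q : V → M
  quotientMap : Topology.IsQuotientMap q
  compact_fiber : IsCompact (q ⁻¹' {p})
  connected_fiber : IsConnected (q ⁻¹' {p})
  homeo_off : IsHomeomorph
    (Set.MapsTo.restrict q ((q ⁻¹' {p})ᶜ) ({p}ᶜ) (fun _ hv => hv))

/-- If `q : (V,Σ) → (M,{p})` is a topological blowup of an `n`-manifold
`M` at `p`, `n ≥ 2`, and at least two distinct points lie on the frontier of `Σ` in `V`,
then some homeomorphism `h` of `(M,{p})` admits no continuous lift through `q`. -/
theorem no_continuous_lift (n : ℕ) (hn : 2 ≤ n)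
    (V M : Type*) [TopologicalSpace V] [TopologicalSpace M]
    [T2Space V] [T2Space M]
    [ChartedSpace (EuclideanSpace ℝ (Fin n)) V]
    [ChartedSpace (EuclideanSpace ℝ (Fin n)) M] (p : M)
    (B : TopBlowup n V M p)
    (a b : V) (ha : a ∈ frontier (B.q ⁻¹' {p})) (hb : b ∈ frontier (B.q ⁻¹' {p}))
    (hab : a ≠ b) :
    ∃ h : M ≃ₜ M, h p = p ∧
      ¬ ∃ hLift : V → V, Continuous hLift ∧ B.q ∘ hLift = ⇑h ∘ B.q := by
  classical
  -- basic facts about the model space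
  haveI : Nontrivial (EuclideanSpace ℝ (Fin n)) := by
    apply Module.nontrivial_of_finrank_pos (R := ℝ)
    rw [finrank_euclideanSpace_fin]
    omega
  have hrank : 1 < Module.rank ℝ (EuclideanSpace ℝ (Fin n)) := by
    rw [← Module.finrank_eq_rank]
    have : Module.finrank ℝ (EuclideanSpace ℝ (Fin n)) = n := finrank_euclideanSpace_fin
    rw [this]
    exact_mod_cast (by omega : 1 < n)
  -- the fiber
  have hqc : Continuous B.q := B.quotientMap.continuous
  have hSigClosed : IsClosed (B.q ⁻¹' {p}) := isClosed_singleton.preimage hqc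
  have hqinj : ∀ w z : V, w ∉ B.q ⁻¹' {p} → z ∉ B.q ⁻¹' {p} → B.q w = B.q z → w = z := by
    intro w z hw hz hqe
    have hinj := B.homeo_off.bijective.injective
    have := hinj (a₁ := ⟨w, hw⟩) (a₂ := ⟨z, hz⟩) (Subtype.ext (by
      exact hqe))
    exact congrArg Subtype.val this
  -- the chart at p
  set ψ := chartAt (EuclideanSpace ℝ (Fin n)) p with hψdef
  have hp : p ∈ ψ.source := mem_chart_source _ p
  set c : EuclideanSpace ℝ (Fin n) := ψ p with hcdef
  have hc_target : c ∈ ψ.target := ψ.map_source hp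
  -- sequences approaching frontier points from outside the fiber
  have hseq : ∀ w : V, w ∈ frontier (B.q ⁻¹' {p}) →
      ∃ x : ℕ → V, (∀ m, x m ∉ B.q ⁻¹' {p}) ∧ (∀ m, B.q (x m) ∈ ψ.source) ∧
        Tendsto x atTop (𝓝 w) := by
    intro w hw
    have hwSig : w ∈ B.q ⁻¹' {p} := hSigClosed.frontier_subset hw
    have hwcl : w ∈ closure (B.q ⁻¹' {p})ᶜ := by
      rw [frontier_eq_closure_inter_closure] at hw
      exact hw.2
    set φ := chartAt (EuclideanSpace ℝ (Fin n)) w with hφdef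
    have hwφ : w ∈ φ.source := mem_chart_source _ w
    have hwq : w ∈ B.q ⁻¹' ψ.source := by
      have : B.q w = p := hwSig
      simp only [mem_preimage, this]
      exact hp
    have hexm : ∀ m : ℕ, ∃ z, z ∈ ((φ.source ∩ φ ⁻¹' (ball (φ w) (1 / (m + 1)))) ∩
        B.q ⁻¹' ψ.source) ∩ (B.q ⁻¹' {p})ᶜ := by
      intro m
      have hopen : IsOpen ((φ.source ∩ φ ⁻¹' (ball (φ w) (1 / (m + 1)))) ∩
          B.q ⁻¹' ψ.source) :=
        (φ.isOpen_inter_preimage isOpen_ball).inter (ψ.open_source.preimage hqc)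
      have hmem : w ∈ (φ.source ∩ φ ⁻¹' (ball (φ w) (1 / (m + 1)))) ∩ B.q ⁻¹' ψ.source := by
        refine ⟨⟨hwφ, ?_⟩, hwq⟩
        simp only [mem_preimage, mem_ball, dist_self]
        positivity
      obtain ⟨z, hz1, hz2⟩ := mem_closure_iff.1 hwcl _ hopen hmem
      exact ⟨z, hz1, hz2⟩
    choose x hx using hexm
    refine ⟨x, fun m => (hx m).2, fun m => (hx m).1.2, ?_⟩
    have hφx : ∀ m, x m ∈ φ.source := fun m => (hx m).1.1.1
    have hdist : ∀ m : ℕ, dist (φ (x m)) (φ w) < 1 / (m + 1) := by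
      intro m
      have := (hx m).1.1.2
      simpa [mem_ball] using this
    have h1 : Tendsto (fun m => φ (x m)) atTop (𝓝 (φ w)) := by
      rw [tendsto_iff_dist_tendsto_zero]
      apply squeeze_zero (fun m => dist_nonneg) (fun m => le_of_lt (hdist m))
      exact tendsto_one_div_add_atTop_nhds_zero_nat
    have h2 : Tendsto (fun m => φ.symm (φ (x m))) atTop (𝓝 (φ.symm (φ w))) :=
      (φ.continuousAt_symm (φ.map_source hwφ)).tendsto.comp h1
    rw [φ.left_inv hwφ] at h2
    exact Filter.Tendsto.congr (fun m => φ.left_inv (hφx m)) h2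
  obtain ⟨x, hx1, hx2, hxa⟩ := hseq a ha
  obtain ⟨x', hx'1, hx'2, hx'b⟩ := hseq b hb
  -- the images in the chart
  set u : ℕ → EuclideanSpace ℝ (Fin n) := fun m => ψ (B.q (x m)) with hudef
  set v : ℕ → EuclideanSpace ℝ (Fin n) := fun m => ψ (B.q (x' m)) with hvdef
  have hqa : B.q a = p := hSigClosed.frontier_subset ha
  have hqb : B.q b = p := hSigClosed.frontier_subset hb
  have hu_tend : Tendsto u atTop (𝓝 c) := by
    have h1 : Tendsto (fun m => B.q (x m)) atTop (𝓝 p) := by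
      have := (hqc.tendsto a).comp hxa
      rwa [hqa] at this
    exact (ψ.continuousAt hp).tendsto.comp h1
  have hv_tend : Tendsto v atTop (𝓝 c) := by
    have h1 : Tendsto (fun m => B.q (x' m)) atTop (𝓝 p) := by
      have := (hqc.tendsto b).comp hx'b
      rwa [hqb] at this
    exact (ψ.continuousAt hp).tendsto.comp h1
  have hu_ne : ∀ m, u m ≠ c := by
    intro m he
    have : B.q (x m) = p := ψ.injOn (hx2 m) hp he
    exact hx1 m this
  have hv_ne : ∀ m, v m ≠ c := by
    intro m he
    have : B.q (x' m) = p := ψ.injOn (hx'2 m) hp he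
    exact hx'1 m this
  -- the radius of the supporting ball
  obtain ⟨r0, hr0, hball⟩ := Metric.isOpen_iff.1 ψ.open_target c hc_target
  have hKsub : closedBall c (r0 / 2) ⊆ ψ.target :=
    (closedBall_subset_ball (by linarith)).trans hball
  -- choice of the next index
  have hexu : ∀ r : ℝ, 0 < r → ∀ k : ℕ, ∃ k' : ℕ, k < k' ∧ dist (u k') c < r := by
    intro r hr k
    have h1 : ∀ᶠ m in atTop, dist (u m) c < r := Metric.tendsto_nhds.1 hu_tend r hr
    obtain ⟨k', hk1, hk2⟩ := ((eventually_gt_atTop k).and h1).exists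
    exact ⟨k', hk1, hk2⟩
  have hexv : ∀ r : ℝ, 0 < r → ∀ k : ℕ, ∃ k' : ℕ, k < k' ∧ dist (v k') c < r := by
    intro r hr k
    have h1 : ∀ᶠ m in atTop, dist (v m) c < r := Metric.tendsto_nhds.1 hv_tend r hr
    obtain ⟨k', hk1, hk2⟩ := ((eventually_gt_atTop k).and h1).exists
    exact ⟨k', hk1, hk2⟩
  set nextu : ℝ → ℕ → ℕ := fun r k => if h : 0 < r then (hexu r h k).choose else 0
    with hnextudef
  set nextv : ℝ → ℕ → ℕ := fun r k => if h : 0 < r then (hexv r h k).choose else 0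
    with hnextvdef
  have hnextu : ∀ r : ℝ, 0 < r → ∀ k, k < nextu r k ∧ dist (u (nextu r k)) c < r := by
    intro r h k
    simp only [hnextudef, dif_pos h]
    exact (hexu r h k).choose_spec
  have hnextv : ∀ r : ℝ, 0 < r → ∀ k, k < nextv r k ∧ dist (v (nextv r k)) c < r := by
    intro r h k
    simp only [hnextvdef, dif_pos h]
    exact (hexv r h k).choose_spec
  -- the recursive construction of radii and indices
  set step : ℝ × ℕ × ℕ → ℝ × ℕ × ℕ := fun t =>
    if 0 < t.1 then
      (min (dist (u (nextu t.1 t.2.1)) c) (min (dist (v (nextv t.1 t.2.2)) c) t.1) / 2,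
        nextu t.1 t.2.1, nextv t.1 t.2.2)
    else t with hstepdef
  set seq : ℕ → ℝ × ℕ × ℕ := fun j => step^[j] (r0 / 2, 0, 0) with hseqdef
  set s : ℕ → ℝ := fun j => (seq j).1 with hsdef
  set kk : ℕ → ℕ := fun j => (seq j).2.1 with hkkdef
  set ll : ℕ → ℕ := fun j => (seq j).2.2 with hlldef
  have hseqsucc : ∀ j, seq (j + 1) = step (seq j) := by
    intro j
    simp only [hseqdef]
    exact Function.iterate_succ_apply' step j _
  have hs0 : s 0 = r0 / 2 := by simp [hsdef, hseqdef]
  have hstept : ∀ t : ℝ × ℕ × ℕ, 0 < t.1 → step t =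
      (min (dist (u (nextu t.1 t.2.1)) c) (min (dist (v (nextv t.1 t.2.2)) c) t.1) / 2,
        nextu t.1 t.2.1, nextv t.1 t.2.2) := by
    intro t ht
    simp only [hstepdef]
    rw [if_pos ht]
  have hpos : ∀ j, 0 < s j := by
    intro j
    induction j with
    | zero => rw [hs0]; linarith
    | succ j ih =>
      have h1 : s (j + 1) = (step (seq j)).1 := by
        show (seq (j + 1)).1 = _
        rw [hseqsucc j]
      rw [h1, hstept (seq j) ih]
      have h2 : 0 < dist (u (nextu (seq j).1 (seq j).2.1)) c := dist_pos.2 (hu_ne _)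
      have h3 : 0 < dist (v (nextv (seq j).1 (seq j).2.2)) c := dist_pos.2 (hv_ne _)
      have h4 : 0 < (seq j).1 := ih
      positivity
  have hstepeq : ∀ j, seq (j + 1) =
      (min (dist (u (nextu (s j) (kk j))) c) (min (dist (v (nextv (s j) (ll j))) c) (s j)) / 2,
        nextu (s j) (kk j), nextv (s j) (ll j)) := by
    intro j
    rw [hseqsucc j]
    exact hstept (seq j) (hpos j)
  have hkksucc : ∀ j, kk (j + 1) = nextu (s j) (kk j) := by
    intro j
    show (seq (j + 1)).2.1 = _
    rw [hstepeq j]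
  have hllsucc : ∀ j, ll (j + 1) = nextv (s j) (ll j) := by
    intro j
    show (seq (j + 1)).2.2 = _
    rw [hstepeq j]
  have hssucc : ∀ j, s (j + 1) =
      min (dist (u (kk (j + 1))) c) (min (dist (v (ll (j + 1))) c) (s j)) / 2 := by
    intro j
    show (seq (j + 1)).1 = _
    rw [hstepeq j, hkksucc j, hllsucc j]
  have hfact : ∀ j, kk j < kk (j + 1) ∧ ll j < ll (j + 1) ∧
      s (j + 1) < dist (u (kk (j + 1))) c ∧ dist (u (kk (j + 1))) c < s j ∧
      s (j + 1) < dist (v (ll (j + 1))) c ∧ dist (v (ll (j + 1))) c < s j ∧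
      s (j + 1) ≤ s j / 2 := by
    intro j
    have h0 := hpos j
    have hu' := hnextu (s j) h0 (kk j)
    have hv' := hnextv (s j) h0 (ll j)
    have e1 : kk (j + 1) = nextu (s j) (kk j) := hkksucc j
    have e2 : ll (j + 1) = nextv (s j) (ll j) := hllsucc j
    have hdu : 0 < dist (u (kk (j + 1))) c := dist_pos.2 (hu_ne _)
    have hdv : 0 < dist (v (ll (j + 1))) c := dist_pos.2 (hv_ne _)
    have e3 := hssucc j
    refine ⟨by rw [e1]; exact hu'.1, by rw [e2]; exact hv'.1, ?_, by rw [e1]; exact hu'.2,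
      ?_, by rw [e2]; exact hv'.2, ?_⟩
    · rw [e3]
      have : min (dist (u (kk (j + 1))) c) (min (dist (v (ll (j + 1))) c) (s j)) ≤
          dist (u (kk (j + 1))) c := min_le_left _ _
      linarith
    · rw [e3]
      have h1 : min (dist (u (kk (j + 1))) c) (min (dist (v (ll (j + 1))) c) (s j)) ≤
          dist (v (ll (j + 1))) c := (min_le_right _ _).trans (min_le_left _ _)
      linarith
    · rw [e3]
      have h1 : min (dist (u (kk (j + 1))) c) (min (dist (v (ll (j + 1))) c) (s j)) ≤ s j :=
        (min_le_right _ _).trans (min_le_right _ _)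
      linarith
  have hkmono : StrictMono kk := strictMono_nat_of_lt_succ (fun j => (hfact j).1)
  have hlmono : StrictMono ll := strictMono_nat_of_lt_succ (fun j => (hfact j).2.1)
  have hsanti : StrictAnti s := strictAnti_nat_of_succ_lt (fun j => by
    have := (hfact j).2.2.2.2.2.2
    have := hpos j
    linarith)
  have hslim : Tendsto s atTop (𝓝 0) := by
    have hbound : ∀ j, s j ≤ r0 / 2 * (1 / 2) ^ j := by
      intro j
      induction j with
      | zero => simp [hs0]
      | succ j ih =>
        have h1 := (hfact j).2.2.2.2.2.2
        calc s (j + 1) ≤ s j / 2 := h1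
          _ ≤ r0 / 2 * (1 / 2) ^ j / 2 := by linarith
          _ = r0 / 2 * (1 / 2) ^ (j + 1) := by ring
    apply squeeze_zero (fun j => le_of_lt (hpos j)) hbound
    have h1 : Tendsto (fun j : ℕ => (1 / 2 : ℝ) ^ j) atTop (𝓝 0) :=
      tendsto_pow_atTop_nhds_zero_of_lt_one (by norm_num) (by norm_num)
    have := h1.const_mul (r0 / 2)
    simpa using this
  -- membership of the chosen points in the annuli
  have hmemu : ∀ j, u (kk (j + 1)) ∈ openAnn c (s (j + 1)) (s j) :=
    fun j => ⟨(hfact j).2.2.1, (hfact j).2.2.2.1⟩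
  have hmemv : ∀ j, v (ll (j + 1)) ∈ openAnn c (s (j + 1)) (s j) :=
    fun j => ⟨(hfact j).2.2.2.2.1, (hfact j).2.2.2.2.2.1⟩
  -- the annulus moves
  have hTex : ∀ j, ∃ T : (EuclideanSpace ℝ (Fin n)) ≃ₜ (EuclideanSpace ℝ (Fin n)),
      T (u (kk (j + 1))) = v (ll (j + 1)) ∧
      ∀ z ∉ openAnn c (s (j + 1)) (s j), T z = z := by
    intro j
    exact exists_homeo_move_of_isOpen_isPreconnected (isOpen_openAnn c _ _)
      (isPreconnected_openAnn hrank c (le_of_lt (hpos (j + 1))) (hsanti (Nat.lt_succ_self j)))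
      (hmemu j) (hmemv j)
  choose T hT1 hT2 using hTex
  set H : ℕ → (EuclideanSpace ℝ (Fin n)) ≃ₜ (EuclideanSpace ℝ (Fin n)) :=
    fun j => if j % 2 = 1 then T j else Homeomorph.refl _ with hHdef
  have hHsupp : ∀ j, ∀ z ∉ openAnn c (s (j + 1)) (s j), H j z = z := by
    intro j z hz
    by_cases hpar : j % 2 = 1
    · simp only [hHdef, if_pos hpar]
      exact hT2 j z hz
    · simp only [hHdef, if_neg hpar, Homeomorph.refl_apply]
      rfl
  -- the glued homeomorphism
  obtain ⟨G, hG1, hG2⟩ := exists_glued_homeo c s hpos hsanti hslim H hHsupp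
  have hGsupp : ∀ z ∉ closedBall c (r0 / 2), G z = z := by
    intro z hz
    apply hG2
    intro j hmem
    have h1 : dist z c < s j := hmem.2
    have h2 : s j ≤ s 0 := hsanti.antitone (Nat.zero_le j)
    rw [mem_closedBall] at hz
    push_neg at hz
    rw [hs0] at h2
    linarith
  -- transport to the manifold
  obtain ⟨h, hh⟩ := exists_homeo_of_chart ψ G (closedBall c (r0 / 2))
    (isCompact_closedBall c _) hKsub hGsupp
  have hGc : G c = c := by
    apply hG2
    intro j hmem
    have := hmem.1
    rw [dist_self] at this
    exact absurd this (not_lt.2 (le_of_lt (hpos (j + 1))))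
  have hhp : h p = p := by
    rw [hh p hp, ← hcdef, hGc, hcdef, ψ.left_inv hp]
  -- values of h on the chosen sequence points
  have hval : ∀ j, h (B.q (x (kk (j + 1)))) =
      if j % 2 = 1 then B.q (x' (ll (j + 1))) else B.q (x (kk (j + 1))) := by
    intro j
    rw [hh _ (hx2 (kk (j + 1)))]
    have e1 : ψ (B.q (x (kk (j + 1)))) = u (kk (j + 1)) := rfl
    rw [e1, hG1 j _ (hmemu j)]
    by_cases hpar : j % 2 = 1
    · rw [if_pos hpar]
      simp only [hHdef, if_pos hpar]
      rw [hT1 j]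
      exact ψ.left_inv (hx'2 (ll (j + 1)))
    · rw [if_neg hpar]
      simp only [hHdef, if_neg hpar, Homeomorph.refl_apply]
      exact ψ.left_inv (hx2 (kk (j + 1)))
  refine ⟨h, hhp, ?_⟩
  rintro ⟨hL, hLc, hLcomm⟩
  have hcomm : ∀ z, B.q (hL z) = h (B.q z) := fun z => congrFun hLcomm z
  have hlift : ∀ j, hL (x (kk (j + 1))) =
      if j % 2 = 1 then x' (ll (j + 1)) else x (kk (j + 1)) := by
    intro j
    have h1 : B.q (hL (x (kk (j + 1)))) =
        if j % 2 = 1 then B.q (x' (ll (j + 1))) else B.q (x (kk (j + 1))) := by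
      rw [hcomm, hval j]
    by_cases hpar : j % 2 = 1
    · rw [if_pos hpar] at h1 ⊢
      have hne : B.q (x' (ll (j + 1))) ≠ p := by
        intro he
        exact hx'1 _ (by simpa using he)
      have hmemL : hL (x (kk (j + 1))) ∉ B.q ⁻¹' {p} := by
        intro hmem
        rw [mem_preimage, mem_singleton_iff] at hmem
        rw [hmem] at h1
        exact hne h1.symm
      exact hqinj _ _ hmemL (hx'1 _) h1
    · rw [if_neg hpar] at h1 ⊢
      have hne : B.q (x (kk (j + 1))) ≠ p := by
        intro he
        exact hx1 _ (by simpa using he)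
      have hmemL : hL (x (kk (j + 1))) ∉ B.q ⁻¹' {p} := by
        intro hmem
        rw [mem_preimage, mem_singleton_iff] at hmem
        rw [hmem] at h1
        exact hne h1.symm
      exact hqinj _ _ hmemL (hx1 _) h1
  -- the contradiction via interleaved subsequences
  have hLseq : Tendsto (fun j => hL (x (kk j))) atTop (𝓝 (hL a)) :=
    (hLc.tendsto a).comp (hxa.comp hkmono.tendsto_atTop)
  have hm1 : StrictMono (fun m : ℕ => 2 * m + 1) := by
    intro i j hij; simp only []; omega
  have hm2 : StrictMono (fun m : ℕ => 2 * m + 2) := by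
    intro i j hij; simp only []; omega
  have heven : hL a = a := by
    have te : Tendsto (fun m => hL (x (kk (2 * m + 1)))) atTop (𝓝 (hL a)) :=
      hLseq.comp hm1.tendsto_atTop
    have te' : Tendsto (fun m => x (kk (2 * m + 1))) atTop (𝓝 a) :=
      (hxa.comp hkmono.tendsto_atTop).comp hm1.tendsto_atTop
    have hcongr : ∀ m, hL (x (kk (2 * m + 1))) = x (kk (2 * m + 1)) := by
      intro m
      have := hlift (2 * m)
      rw [if_neg (by omega : ¬(2 * m) % 2 = 1)] at this
      exact this
    exact tendsto_nhds_unique (Filter.Tendsto.congr hcongr te) te'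
  have hodd : hL a = b := by
    have te : Tendsto (fun m => hL (x (kk (2 * m + 2)))) atTop (𝓝 (hL a)) :=
      hLseq.comp hm2.tendsto_atTop
    have te' : Tendsto (fun m => x' (ll (2 * m + 2))) atTop (𝓝 b) :=
      (hx'b.comp hlmono.tendsto_atTop).comp hm2.tendsto_atTop
    have hcongr : ∀ m, hL (x (kk (2 * m + 2))) = x' (ll (2 * m + 2)) := by
      intro m
      have := hlift (2 * m + 1)
      rw [if_pos (by omega : (2 * m + 1) % 2 = 1)] at this
      exact this
    exact tendsto_nhds_unique (Filter.Tendsto.congr hcongr te) te'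
  exact hab (heven ▸ hodd)

end Main
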